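/- If A is Schur stable and (A,C) is observable, then for the discrete dynamics X_{k+1} = Aᵀ X_k A + α·tr(X_k)·CᵀC with α > 0 and X₀ a nonzero positive semidefinite matrix, X_k is positive definite for all k ≥ n. -/

import Mathlib

open Matrix

section DLyapAux

private lemma dlyap_dp_self_nonneg {n : ℕ} (v : Fin n → ℝ) : 0 ≤ v ⬝ᵥ v := by
  simpa using dotProduct_self_star_nonneg v

private lemma dlyap_dp_conj {n : ℕ} (M N : Matrix (Fin n) (Fin n) ℝ) (x : Fin n → ℝ) :
    x ⬝ᵥ ((Mᵀ * N * M) *ᵥ x) = (M *ᵥ x) ⬝ᵥ (N *ᵥ (M *ᵥ x)) := by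
  rw [← mulVec_mulVec, ← mulVec_mulVec, dotProduct_mulVec, vecMul_transpose]

private lemma dlyap_dp_CtC {n m : ℕ} (C : Matrix (Fin m) (Fin n) ℝ) (x : Fin n → ℝ) :
    x ⬝ᵥ ((Cᵀ * C) *ᵥ x) = (C *ᵥ x) ⬝ᵥ (C *ᵥ x) := by
  rw [← mulVec_mulVec, dotProduct_mulVec, vecMul_transpose]

private lemma dlyap_psd_smul {n : ℕ} {M : Matrix (Fin n) (Fin n) ℝ} (hM : M.PosSemidef)
    {c : ℝ} (hc : 0 ≤ c) : (c • M).PosSemidef := by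
  refine PosSemidef.of_dotProduct_mulVec_nonneg ?_ (fun x => ?_)
  · unfold Matrix.IsHermitian
    rw [conjTranspose_smul, hM.1]
    simp
  · rw [smul_mulVec, dotProduct_smul]
    exact mul_nonneg hc (hM.dotProduct_mulVec_nonneg x)

private lemma dlyap_psd_trace_nonneg {n : ℕ} {M : Matrix (Fin n) (Fin n) ℝ}
    (hM : M.PosSemidef) : 0 ≤ M.trace := by
  rw [Matrix.trace]
  refine Finset.sum_nonneg fun i _ => ?_
  have h := hM.dotProduct_mulVec_nonneg (Pi.single i 1)
  simpa [Matrix.diag, dotProduct, mulVec, Pi.single_apply, Finset.sum_ite_eq'] using h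

private lemma dlyap_psd_trace_pos {n : ℕ} {M : Matrix (Fin n) (Fin n) ℝ}
    (hM : M.PosSemidef) (hne : M ≠ 0) : 0 < M.trace := by
  have hdiag : ∀ i, Pi.single i 1 ⬝ᵥ M *ᵥ Pi.single i (1:ℝ) = M i i := fun i => by
    simp [dotProduct, mulVec, Pi.single_apply, Finset.sum_ite_eq']
  have hex : ∃ j, M *ᵥ Pi.single j (1:ℝ) ≠ 0 := by
    by_contra h
    push_neg at h
    apply hne
    ext i j
    have := congrFun (h j) i
    simpa [mulVec, Pi.single_apply, dotProduct] using this
  obtain ⟨j, hj⟩ := hex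
  have h0 : Pi.single j 1 ⬝ᵥ M *ᵥ Pi.single j (1:ℝ) ≠ 0 := by
    intro h
    exact hj ((hM.dotProduct_mulVec_zero_iff _).mp (by simpa using h))
  have hpos : 0 < M j j := by
    rw [← hdiag j]
    exact lt_of_le_of_ne (by simpa using hM.dotProduct_mulVec_nonneg (Pi.single j 1)) (Ne.symm h0)
  rw [Matrix.trace]
  refine Finset.sum_pos' (fun i _ => ?_) ⟨j, Finset.mem_univ j, hpos⟩
  have h := hM.dotProduct_mulVec_nonneg (Pi.single i 1)
  simpa [Matrix.diag, dotProduct, mulVec, Pi.single_apply, Finset.sum_ite_eq'] using h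

private lemma dlyap_decomp {n m : ℕ} (A : Matrix (Fin n) (Fin n) ℝ)
    (C : Matrix (Fin m) (Fin n) ℝ)
    (α : ℝ) (X : ℕ → Matrix (Fin n) (Fin n) ℝ)
    (hRec : ∀ k, X (k + 1) = Aᵀ * X k * A + (α * (X k).trace) • (Cᵀ * C)) :
    ∀ j k, X (j + k) = (A ^ j)ᵀ * X k * (A ^ j) +
      ∑ i ∈ Finset.range j,
        (α * (X (j + k - 1 - i)).trace) • ((A ^ i)ᵀ * (Cᵀ * C) * (A ^ i)) := by
  intro j
  induction j with
  | zero => intro k; simp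
  | succ j ih =>
    intro k
    have h1 : j + 1 + k = j + (k + 1) := by omega
    rw [h1, ih (k + 1), hRec k, Finset.sum_range_succ]
    have hs : ∀ i ∈ Finset.range j,
        (α * (X (j + (k+1) - 1 - i)).trace) • ((A ^ i)ᵀ * (Cᵀ * C) * (A ^ i)) =
        (α * (X (j + 1 + k - 1 - i)).trace) • ((A ^ i)ᵀ * (Cᵀ * C) * (A ^ i)) := by
      intro i hi
      rw [Finset.mem_range] at hi
      have : j + (k+1) - 1 - i = j + 1 + k - 1 - i := by omega
      rw [this]
    rw [Finset.sum_congr rfl hs]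
    have h2 : j + (k + 1) - 1 - j = k := by omega
    rw [h2]
    simp only [Matrix.mul_add, Matrix.add_mul, Matrix.mul_smul, Matrix.smul_mul,
      transpose_mul, pow_succ']
    simp only [Matrix.mul_assoc]
    abel

end DLyapAux

/-- If `A` is Schur stable and `(A,C)` is observable, the discrete dynamics
`X_{k+1} = AᵀX_k A + α·tr(X_k)·CᵀC` started at a nonzero PSD matrix is
positive definite for all `k ≥ n`. -/
theorem discrete_lyapunov_iteration_ultimately_posdef
    {n m : ℕ} (A : Matrix (Fin n) (Fin n) ℝ) (C : Matrix (Fin m) (Fin n) ℝ)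
    (hSchur : ∀ μ ∈ spectrum ℂ (A.map Complex.ofReal), ‖μ‖ < 1)
    (hObs : ∀ v : Fin n → ℝ, (∀ k < n, C *ᵥ ((A ^ k) *ᵥ v) = 0) → v = 0)
    (α : ℝ) (hα : 0 < α)
    (X : ℕ → Matrix (Fin n) (Fin n) ℝ)
    (hX0 : (X 0).PosSemidef) (hX0ne : X 0 ≠ 0)
    (hRec : ∀ k, X (k + 1) = Aᵀ * X k * A + (α * (X k).trace) • (Cᵀ * C)) :
    ∀ k ≥ n, (X k).PosDef := by
  rcases Nat.eq_zero_or_pos n with hn | hn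
  · subst hn
    intro k _
    refine PosDef.of_dotProduct_mulVec_pos ?_ (fun x hx => ?_)
    · ext i j; exact i.elim0
    · exact absurd (funext fun i => i.elim0) hx
  -- n > 0 : C ≠ 0
  have hC : C ≠ 0 := by
    intro h
    have h1 := hObs (Pi.single ⟨0, hn⟩ 1) (fun k _ => by simp [h])
    have h2 := congrFun h1 ⟨0, hn⟩
    simp [Pi.single_apply] at h2
  have hPSDCtC : (Cᵀ * C).PosSemidef := by
    have h := Matrix.posSemidef_conjTranspose_mul_self C
    rwa [conjTranspose_eq_transpose_of_trivial] at h
  have hCtCne : (Cᵀ * C) ≠ 0 := by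
    intro h
    apply hC
    ext i j
    have h1 : C *ᵥ Pi.single j (1:ℝ) = 0 := by
      rw [← dotProduct_self_eq_zero, ← dlyap_dp_CtC, h]
      simp
    have h2 := congrFun h1 i
    simpa [mulVec, Pi.single_apply, dotProduct] using h2
  have htC : 0 < (Cᵀ * C).trace := dlyap_psd_trace_pos hPSDCtC hCtCne
  -- invariant
  have hall : ∀ k, (X k).PosSemidef ∧ 0 < (X k).trace := by
    intro k
    induction k with
    | zero => exact ⟨hX0, dlyap_psd_trace_pos hX0 hX0ne⟩
    | succ k ih =>
      have hpsd1 : (Aᵀ * X k * A).PosSemidef := by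
        have h := ih.1.conjTranspose_mul_mul_same A
        rwa [conjTranspose_eq_transpose_of_trivial] at h
      have hc : 0 ≤ α * (X k).trace := le_of_lt (mul_pos hα ih.2)
      have hpsd2 : ((α * (X k).trace) • (Cᵀ * C)).PosSemidef := dlyap_psd_smul hPSDCtC hc
      refine ⟨by rw [hRec k]; exact hpsd1.add hpsd2, ?_⟩
      rw [hRec k, trace_add, trace_smul, smul_eq_mul]
      have h1 : 0 < (α * (X k).trace) * (Cᵀ * C).trace := mul_pos (mul_pos hα ih.2) htC
      have h2 := dlyap_psd_trace_nonneg hpsd1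
      linarith
  intro k hk
  refine PosDef.of_dotProduct_mulVec_pos (hall k).1.1 (fun x hx => ?_)
  have hkeq : k = n + (k - n) := by omega
  have hd := dlyap_decomp A C α X hRec n (k - n)
  rw [← hkeq] at hd
  have hx' : ¬ ∀ i < n, C *ᵥ ((A ^ i) *ᵥ x) = 0 := fun h => hx (hObs x h)
  push_neg at hx'
  obtain ⟨i0, hi0, hC0⟩ := hx'
  have hstar : (star x : Fin n → ℝ) = x := funext fun i => by simp
  rw [hstar, hd, Matrix.add_mulVec, dotProduct_add, dlyap_dp_conj]
  have hsum : x ⬝ᵥ ((∑ i ∈ Finset.range n,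
        (α * (X (k - 1 - i)).trace) • ((A ^ i)ᵀ * (Cᵀ * C) * (A ^ i))) *ᵥ x) =
      ∑ i ∈ Finset.range n, (α * (X (k - 1 - i)).trace) *
        ((C *ᵥ ((A ^ i) *ᵥ x)) ⬝ᵥ (C *ᵥ ((A ^ i) *ᵥ x))) := by
    have hms : (∑ i ∈ Finset.range n,
        (α * (X (k - 1 - i)).trace) • ((A ^ i)ᵀ * (Cᵀ * C) * (A ^ i))) *ᵥ x =
        ∑ i ∈ Finset.range n,
        ((α * (X (k - 1 - i)).trace) • ((A ^ i)ᵀ * (Cᵀ * C) * (A ^ i))) *ᵥ x :=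
      map_sum (Matrix.mulVec.addMonoidHomLeft x) _ _
    have hdp : x ⬝ᵥ (∑ i ∈ Finset.range n,
        ((α * (X (k - 1 - i)).trace) • ((A ^ i)ᵀ * (Cᵀ * C) * (A ^ i))) *ᵥ x) =
        ∑ i ∈ Finset.range n,
        x ⬝ᵥ (((α * (X (k - 1 - i)).trace) • ((A ^ i)ᵀ * (Cᵀ * C) * (A ^ i))) *ᵥ x) := by
      simp only [dotProduct, Finset.sum_apply, Finset.mul_sum]
      rw [Finset.sum_comm]
    rw [hms, hdp]
    refine Finset.sum_congr rfl fun i _ => ?_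
    rw [smul_mulVec, dotProduct_smul, smul_eq_mul, dlyap_dp_conj, dlyap_dp_CtC]
  rw [hsum]
  have hterm : 0 < ∑ i ∈ Finset.range n, (α * (X (k - 1 - i)).trace) *
      ((C *ᵥ ((A ^ i) *ᵥ x)) ⬝ᵥ (C *ᵥ ((A ^ i) *ᵥ x))) := by
    refine Finset.sum_pos' (fun i _ => mul_nonneg (le_of_lt (mul_pos hα (hall _).2))
      (dlyap_dp_self_nonneg _)) ⟨i0, Finset.mem_range.mpr hi0, ?_⟩
    refine mul_pos (mul_pos hα (hall _).2) ?_
    refine lt_of_le_of_ne (dlyap_dp_self_nonneg _) fun h => ?_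
    exact hC0 (dotProduct_self_eq_zero.mp h.symm)
  have hfst : 0 ≤ (A ^ n *ᵥ x) ⬝ᵥ (X (k - n) *ᵥ (A ^ n *ᵥ x)) := by
    simpa using (hall (k - n)).1.dotProduct_mulVec_nonneg (A ^ n *ᵥ x)
  linarith
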